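/- arXiv:1702.00244 — 2 statements merged into one kernel-verified Lean document; each statement's English description precedes it below -/
import Mathlib

section
/- Let (B,E,s) be an extriangulated category, let A --x--> B --y--> C --δ--> be an E-triangle, let f: A → D be any morphism, and let D --d--> E --e--> C --(f_*δ)--> be any E-triangle realizing f_*δ. Then there exists a morphism g: B → E such that (f, g, id_C) is a morphism of E-triangles from (x, y, δ) to (d, e, f_*δ), and moreover the sequence A --[-f, x]^T--> D ⊕ B --[d, g]--> E together with e^*δ is an E-triangle. -/
namespace ExtriHearts

open CategoryTheory CategoryTheory.Limits Opposite

attribute [local instance] CategoryTheory.Limits.hasBinaryBiproducts_of_finite_biproducts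

universe v u v₂ u₂

section IdealQuotient

variable {D : Type u₂} [Category.{v₂} D] [Preadditive D]

/-- The subgroup of morphisms `X ⟶ Y` generated by those factoring through an object of `W`. -/
def wIdeal (W : Set D) (X Y : D) : AddSubgroup (X ⟶ Y) :=
  AddSubgroup.closure {f : X ⟶ Y | ∃ Z ∈ W, ∃ p : X ⟶ Z, ∃ q : Z ⟶ Y, f = p ≫ q}

/-- The hom relation on `D` identifying morphisms whose difference lies in the ideal
generated by morphisms factoring through an object of `W`.  (For an additively closed
subcategory `W` this is the usual relation "`f - g` factors through an object of `W`".) -/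
def wRel (W : Set D) : HomRel D := fun {X Y} f g => f - g ∈ wIdeal W X Y

lemma comp_left_mem_wIdeal (W : Set D) {X Y Z : D} (f : X ⟶ Y) {g : Y ⟶ Z}
    (hg : g ∈ wIdeal W Y Z) : f ≫ g ∈ wIdeal W X Z := by
  have hle : wIdeal W Y Z ≤ (wIdeal W X Z).comap (Preadditive.leftComp Z f) := by
    rw [wIdeal, AddSubgroup.closure_le]
    rintro g ⟨Z₀, hZ₀, p, q, rfl⟩
    exact AddSubgroup.subset_closure ⟨Z₀, hZ₀, f ≫ p, q, by
      simp [Preadditive.leftComp]⟩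
  simpa [Preadditive.leftComp] using hle hg

lemma comp_right_mem_wIdeal (W : Set D) {X Y Z : D} {f : X ⟶ Y} (g : Y ⟶ Z)
    (hf : f ∈ wIdeal W X Y) : f ≫ g ∈ wIdeal W X Z := by
  have hle : wIdeal W X Y ≤ (wIdeal W X Z).comap (Preadditive.rightComp X g) := by
    rw [wIdeal, AddSubgroup.closure_le]
    rintro f ⟨Z₀, hZ₀, p, q, rfl⟩
    exact AddSubgroup.subset_closure ⟨Z₀, hZ₀, p, q ≫ g, by
      simp [Preadditive.rightComp]⟩
  simpa [Preadditive.rightComp] using hle hf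

instance wRel_congruence (W : Set D) : Congruence (wRel W) where
  equivalence :=
    { refl := fun f => by
        show f - f ∈ wIdeal W _ _
        simp only [sub_self]
        exact zero_mem _
      symm := fun {f g} h => by
        have h' : f - g ∈ wIdeal W _ _ := h
        show g - f ∈ wIdeal W _ _
        simpa only [neg_sub] using neg_mem h'
      trans := fun {f g h} h₁ h₂ => by
        have h₁' : f - g ∈ wIdeal W _ _ := h₁
        have h₂' : g - h ∈ wIdeal W _ _ := h₂
        show f - h ∈ wIdeal W _ _
        simpa only [sub_add_sub_cancel] using add_mem h₁' h₂' }
  comp_left := fun {X Y Z} f {g g'} h => by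
    have h' : g - g' ∈ wIdeal W _ _ := h
    show f ≫ g - f ≫ g' ∈ wIdeal W _ _
    simpa only [← Preadditive.comp_sub] using comp_left_mem_wIdeal W f h'
  comp_right := fun {X Y Z} {f f'} g h => by
    have h' : f - f' ∈ wIdeal W _ _ := h
    show f ≫ g - f' ≫ g ∈ wIdeal W _ _
    simpa only [← Preadditive.sub_comp] using comp_right_mem_wIdeal W g h'

/-- The quotient of a preadditive category by (the ideal generated by) the morphisms factoring
through a class of objects `W`. -/
abbrev QuotCat (W : Set D) := CategoryTheory.Quotient (wRel W)

/-- The canonical quotient functor. -/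
abbrev toQuot (W : Set D) : D ⥤ QuotCat W := Quotient.functor _

instance quotCatPreadditive (W : Set D) : Preadditive (QuotCat W) :=
  Quotient.preadditive _ (fun X Y f₁ f₂ g₁ g₂ h₁ h₂ => by
    have h₁' : f₁ - f₂ ∈ wIdeal W X Y := h₁
    have h₂' : g₁ - g₂ ∈ wIdeal W X Y := h₂
    show f₁ + g₁ - (f₂ + g₂) ∈ wIdeal W X Y
    have heq : f₁ + g₁ - (f₂ + g₂) = f₁ - f₂ + (g₁ - g₂) := by abel
    rw [heq]
    exact add_mem h₁' h₂')

end IdealQuotient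

section ExtCat

/-- The data of an additive `Ab`-valued bifunctor together with a realization predicate:
`realize δ x y` means that the 3-term sequence `A --x--> X --y--> C` realizes the
`E`-extension `δ ∈ E(C,A)`, i.e. belongs to the equivalence class `s(δ)`. -/
structure PreExtStruct (B : Type u) [Category.{v} B] [Preadditive B] where
  /-- The additive bifunctor `E : Bᵒᵖ × B → Ab`. -/
  E : Bᵒᵖ ⥤ B ⥤ AddCommGrpCat.{v}

namespace PreExtStruct

variable {B : Type u} [Category.{v} B] [Preadditive B]

/-- The abelian group `E(C,A)` of `E`-extensions of `C` by `A`. -/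
abbrev Ext (σ : PreExtStruct B) (C A : B) : AddCommGrpCat.{v} := (σ.E.obj (op C)).obj A

/-- `a_* δ`, the pushforward of an `E`-extension along `a : A ⟶ A'`. -/
def push (σ : PreExtStruct B) {C A A' : B} (a : A ⟶ A') (δ : σ.Ext C A) : σ.Ext C A' :=
  (σ.E.obj (op C)).map a δ

/-- `c^* δ`, the pullback of an `E`-extension along `c : C' ⟶ C`. -/
def pull (σ : PreExtStruct B) {C' C A : B} (c : C' ⟶ C) (δ : σ.Ext C A) : σ.Ext C' A :=
  (σ.E.map c.op).app A δ

/-- The direct sum `δ ⊕ δ'` of two `E`-extensions, i.e. the element of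
`E(C ⊞ C', A ⊞ A')` corresponding to `(δ, 0, 0, δ')`. -/
noncomputable def sumExt (σ : PreExtStruct B) [HasBinaryBiproducts B] {C C' A A' : B}
    (δ : σ.Ext C A) (δ' : σ.Ext C' A') : σ.Ext (C ⊞ C') (A ⊞ A') :=
  σ.push biprod.inl (σ.pull biprod.fst δ) + σ.push biprod.inr (σ.pull biprod.snd δ')

end PreExtStruct

/-- An *extriangulated category* structure `(E, s)` on an additive category `B`, consisting of
an additive bifunctor `E : Bᵒᵖ × B → Ab` and an additive realization `s` of `E` (encoded by the
predicate `realize`), subject to the axioms (ET1), (ET2), (ET3), (ET3)ᵒᵖ, (ET4), (ET4)ᵒᵖ of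
Nakaoka–Palu. -/
structure ExtStruct (B : Type u) [Category.{v} B] [Preadditive B] [HasFiniteBiproducts B]
    extends PreExtStruct B where
  /-- (ET1) `E` is additive in the second variable. -/
  additive_fst : ∀ Cop : Bᵒᵖ, (E.obj Cop).Additive
  /-- (ET1) `E` is additive in the first variable. -/
  additive_snd : ∀ A : B, (E.flip.obj A).Additive
  /-- `realize δ x y` means the sequence `A --x--> X --y--> C` realizes `δ`, i.e. it belongs to
  the equivalence class `s(δ)`. -/
  realize : ∀ ⦃A C : B⦄, toPreExtStruct.Ext C A → ∀ ⦃X : B⦄, (A ⟶ X) → (X ⟶ C) → Prop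
  /-- Every `E`-extension is realized by some sequence. -/
  realize_ex : ∀ ⦃A C : B⦄ (δ : toPreExtStruct.Ext C A),
      ∃ (X : B) (x : A ⟶ X) (y : X ⟶ C), realize δ x y
  /-- `s(δ)` is closed under the equivalence of sequences. -/
  realize_iso : ∀ ⦃A C X X' : B⦄ (δ : toPreExtStruct.Ext C A) (x : A ⟶ X) (y : X ⟶ C)
      (b : X ≅ X'), realize δ x y → realize δ (x ≫ b.hom) (b.inv ≫ y)
  /-- Any two realizations of `δ` are equivalent sequences. -/
  realize_unique : ∀ ⦃A C X X' : B⦄ (δ : toPreExtStruct.Ext C A) (x : A ⟶ X) (y : X ⟶ C)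
      (x' : A ⟶ X') (y' : X' ⟶ C), realize δ x y → realize δ x' y' →
      ∃ b : X ≅ X', x ≫ b.hom = x' ∧ b.hom ≫ y' = y
  /-- (ET2)(∗) Any morphism of `E`-extensions is realized by a morphism of sequences. -/
  realize_map : ∀ ⦃A C A' C' X X' : B⦄ (δ : toPreExtStruct.Ext C A) (δ' : toPreExtStruct.Ext C' A')
      (x : A ⟶ X) (y : X ⟶ C) (x' : A' ⟶ X') (y' : X' ⟶ C') (a : A ⟶ A') (c : C ⟶ C'),
      realize δ x y → realize δ' x' y' →
      toPreExtStruct.push a δ = toPreExtStruct.pull c δ' →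
      ∃ b : X ⟶ X', x ≫ b = a ≫ x' ∧ y ≫ c = b ≫ y'
  /-- (ET2)(i) The split extension is realized by the split sequence. -/
  realize_zero : ∀ A C : B,
      realize (0 : toPreExtStruct.Ext C A) (biprod.inl : A ⟶ A ⊞ C) (biprod.snd : A ⊞ C ⟶ C)
  /-- (ET2)(ii) Realization is additive. -/
  realize_sum : ∀ ⦃A C A' C' X X' : B⦄ (δ : toPreExtStruct.Ext C A)
      (δ' : toPreExtStruct.Ext C' A') (x : A ⟶ X) (y : X ⟶ C) (x' : A' ⟶ X') (y' : X' ⟶ C'),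
      realize δ x y → realize δ' x' y' →
      realize (toPreExtStruct.sumExt δ δ') (biprod.map x x') (biprod.map y y')
  /-- (ET3) -/
  et3 : ∀ ⦃A C A' C' X X' : B⦄ (δ : toPreExtStruct.Ext C A) (δ' : toPreExtStruct.Ext C' A')
      (x : A ⟶ X) (y : X ⟶ C) (x' : A' ⟶ X') (y' : X' ⟶ C'),
      realize δ x y → realize δ' x' y' → ∀ (a : A ⟶ A') (b : X ⟶ X'), x ≫ b = a ≫ x' →
      ∃ c : C ⟶ C', toPreExtStruct.push a δ = toPreExtStruct.pull c δ' ∧ y ≫ c = b ≫ y'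
  /-- (ET3)ᵒᵖ -/
  et3op : ∀ ⦃A C A' C' X X' : B⦄ (δ : toPreExtStruct.Ext C A) (δ' : toPreExtStruct.Ext C' A')
      (x : A ⟶ X) (y : X ⟶ C) (x' : A' ⟶ X') (y' : X' ⟶ C'),
      realize δ x y → realize δ' x' y' → ∀ (b : X ⟶ X') (c : C ⟶ C'), y ≫ c = b ≫ y' →
      ∃ a : A ⟶ A', toPreExtStruct.push a δ = toPreExtStruct.pull c δ' ∧ x ≫ b = a ≫ x'
  /-- (ET4) -/
  et4 : ∀ ⦃A B₀ D C F : B⦄ (δ : toPreExtStruct.Ext D A) (f : A ⟶ B₀) (f' : B₀ ⟶ D)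
      (δ' : toPreExtStruct.Ext F B₀) (g : B₀ ⟶ C) (g' : C ⟶ F),
      realize δ f f' → realize δ' g g' →
      ∃ (E₀ : B) (d : D ⟶ E₀) (e : E₀ ⟶ F) (h' : C ⟶ E₀) (δ'' : toPreExtStruct.Ext E₀ A),
        g ≫ h' = f' ≫ d ∧ h' ≫ e = g' ∧
        realize δ'' (f ≫ g) h' ∧ realize (toPreExtStruct.push f' δ') d e ∧
        toPreExtStruct.pull d δ'' = δ ∧ toPreExtStruct.push f δ'' = toPreExtStruct.pull e δ'
  /-- (ET4)ᵒᵖ -/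
  et4op : ∀ ⦃F C B₀ D A : B⦄ (δ' : toPreExtStruct.Ext B₀ F) (s : F ⟶ C) (t : C ⟶ B₀)
      (δ : toPreExtStruct.Ext A D) (u : D ⟶ B₀) (v : B₀ ⟶ A),
      realize δ' s t → realize δ u v →
      ∃ (E₀ : B) (e : F ⟶ E₀) (d : E₀ ⟶ D) (m : E₀ ⟶ C) (δ'' : toPreExtStruct.Ext A E₀),
        m ≫ t = d ≫ u ∧ e ≫ m = s ∧
        realize δ'' m (t ≫ v) ∧ realize (toPreExtStruct.pull u δ') e d ∧
        toPreExtStruct.push d δ'' = δ ∧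
        toPreExtStruct.pull v δ'' = toPreExtStruct.push e δ'

namespace ExtStruct

variable {B : Type u} [Category.{v} B] [Preadditive B] [HasFiniteBiproducts B] (σ : ExtStruct B)

/-- A sequence `A --x--> X --y--> C` is a conflation if it realizes some `E`-extension. -/
def Conflation {A X C : B} (x : A ⟶ X) (y : X ⟶ C) : Prop :=
  ∃ δ : σ.Ext C A, σ.realize δ x y

/-- `Cone(D₁, D₂)`: objects `X` admitting a conflation `D₁ ↣ D₂ ↠ X`. -/
def Cone (D₁ D₂ : Set B) : Set B :=
  {X | ∃ (A Y : B) (f : A ⟶ Y) (g : Y ⟶ X), A ∈ D₁ ∧ Y ∈ D₂ ∧ σ.Conflation f g}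

/-- `CoCone(D₁, D₂)`: objects `X` admitting a conflation `X ↣ D₁ ↠ D₂`. -/
def CoCone (D₁ D₂ : Set B) : Set B :=
  {X | ∃ (Y C : B) (f : X ⟶ Y) (g : Y ⟶ C), Y ∈ D₁ ∧ C ∈ D₂ ∧ σ.Conflation f g}

/-- `D₁ ∗ D₂`: objects `X` admitting a conflation `D₁ ↣ X ↠ D₂`. -/
def star (D₁ D₂ : Set B) : Set B :=
  {X | ∃ (A C : B) (f : A ⟶ X) (g : X ⟶ C), A ∈ D₁ ∧ C ∈ D₂ ∧ σ.Conflation f g}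

/-- `add(D₁ ∗ D₂)`: direct summands of objects of `D₁ ∗ D₂`. -/
def addStar (D₁ D₂ : Set B) : Set B :=
  {X | ∃ Y ∈ σ.star D₁ D₂, ∃ (s : X ⟶ Y) (r : Y ⟶ X), s ≫ r = 𝟙 X}

/-- An object `P` is projective if `E(P, −) = 0`. -/
def IsProj (P : B) : Prop := ∀ (A : B) (δ : σ.Ext P A), δ = 0

/-- An object `I` is injective if `E(−, I) = 0`. -/
def IsInj (I : B) : Prop := ∀ (C : B) (δ : σ.Ext C I), δ = 0

/-- The class of projective objects. -/
def projs : Set B := {P | σ.IsProj P}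

/-- `B` has enough projectives: every object admits a deflation from a projective. -/
def EnoughProj : Prop :=
  ∀ X : B, ∃ (P K : B) (i : K ⟶ P) (p : P ⟶ X), σ.IsProj P ∧ σ.Conflation i p

/-- `B` has enough injectives: every object admits an inflation into an injective. -/
def EnoughInj : Prop :=
  ∀ X : B, ∃ (I C : B) (i : X ⟶ I) (p : I ⟶ C), σ.IsInj I ∧ σ.Conflation i p

end ExtStruct

/-- A full additive subcategory (given as a class of objects), closed under isomorphisms and
direct summands. -/
structure AddClosed {B : Type u} [Category.{v} B] [Preadditive B] [HasFiniteBiproducts B]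
    (U : Set B) : Prop where
  zero_mem : ∀ Z : B, IsZero Z → Z ∈ U
  biprod_mem : ∀ X Y : B, X ∈ U → Y ∈ U → (X ⊞ Y) ∈ U
  summand_mem : ∀ X Y : B, Y ∈ U → ∀ (s : X ⟶ Y) (r : Y ⟶ X), s ≫ r = 𝟙 X → X ∈ U

namespace ExtStruct

variable {B : Type u} [Category.{v} B] [Preadditive B] [HasFiniteBiproducts B] (σ : ExtStruct B)

/-- A (complete) cotorsion pair `(U, V)` on an extriangulated category. -/
structure IsCotorsionPair (U V : Set B) : Prop where
  addU : AddClosed U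
  addV : AddClosed V
  ext_vanish : ∀ ⦃X : B⦄, X ∈ U → ∀ ⦃Y : B⦄, Y ∈ V → ∀ δ : σ.Ext X Y, δ = 0
  resolve : ∀ X : B, ∃ (V₀ U₀ : B) (f : V₀ ⟶ U₀) (g : U₀ ⟶ X),
      V₀ ∈ V ∧ U₀ ∈ U ∧ σ.Conflation f g
  coresolve : ∀ X : B, ∃ (V₀ U₀ : B) (f : X ⟶ V₀) (g : V₀ ⟶ U₀),
      V₀ ∈ V ∧ U₀ ∈ U ∧ σ.Conflation f g

/-- A twin cotorsion pair `((S,T), (U,V))`. -/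
structure IsTwinCotorsionPair (S T U V : Set B) : Prop where
  fst : σ.IsCotorsionPair S T
  snd : σ.IsCotorsionPair U V
  ext_SV : ∀ ⦃X : B⦄, X ∈ S → ∀ ⦃Y : B⦄, Y ∈ V → ∀ δ : σ.Ext X Y, δ = 0

section Twin

variable (S T U V : Set B)

/-- `B⁺ = Cone(V, W)` for the core `W = T ∩ U` of a twin cotorsion pair. -/
def tPos : Set B := σ.Cone V (T ∩ U)

/-- `B⁻ = CoCone(W, S)` for the core `W = T ∩ U` of a twin cotorsion pair. -/
def tNeg : Set B := σ.CoCone (T ∩ U) S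

/-- The class of objects of the heart `H = B⁺ ∩ B⁻` of a twin cotorsion pair. -/
def tHeartSet : Set B := σ.tPos T U V ∩ σ.tNeg S T U

/-- The heart `H/W` of a twin cotorsion pair, as a full subcategory of the quotient
category `B/W`. -/
abbrev THeart := ObjectProperty.FullSubcategory (fun X : QuotCat (T ∩ U : Set B) => X.as ∈ σ.tHeartSet S T U V)


/-- A *reflection sequence* for `B₀`: a conflation `B₀ ↣ Z ↠ S₀` with `Z ∈ B⁺`, `S₀ ∈ S`,
such that `z^* : E(Z, V₀) → E(B₀, V₀)` is surjective for every `V₀ ∈ V`. -/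
def IsReflectionSeq {B₀ Z S₀ : B} (z : B₀ ⟶ Z) (w : Z ⟶ S₀) : Prop :=
  Z ∈ σ.tPos T U V ∧ S₀ ∈ S ∧ σ.Conflation z w ∧
    ∀ ⦃V₀ : B⦄, V₀ ∈ V → Function.Surjective (fun δ : σ.Ext Z V₀ => σ.pull z δ)

/-- A *coreflection sequence* for `B₀`: a conflation `V₀ ↣ X ↠ B₀` with `X ∈ B⁻`, `V₀ ∈ V`,
such that `x_* : E(S₀, X) → E(S₀, B₀)` is surjective for every `S₀ ∈ S`. -/
def IsCoreflectionSeq {V₀ X B₀ : B} (v : V₀ ⟶ X) (x : X ⟶ B₀) : Prop :=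
  X ∈ σ.tNeg S T U ∧ V₀ ∈ V ∧ σ.Conflation v x ∧
    ∀ ⦃S₀ : B⦄, S₀ ∈ S → Function.Surjective (fun δ : σ.Ext S₀ X => σ.push x δ)

end Twin

section Single

variable (U V : Set B)

/-- `B⁺` for a single cotorsion pair `(U,V)`, with core `W = U ∩ V`. -/
def sPos : Set B := σ.Cone V (U ∩ V)

/-- `B⁻` for a single cotorsion pair `(U,V)`, with core `W = U ∩ V`. -/
def sNeg : Set B := σ.CoCone (U ∩ V) U

/-- The class of objects of the heart of a single cotorsion pair. -/
def sHeartSet : Set B := σ.sPos U V ∩ σ.sNeg U V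

/-- The heart `H/W` of a cotorsion pair `(U,V)`, a full subcategory of `B/W`, `W = U ∩ V`. -/
abbrev SHeart := ObjectProperty.FullSubcategory (fun X : QuotCat (U ∩ V : Set B) => X.as ∈ σ.sHeartSet U V)

/-- The inclusion of the heart into the quotient category `B/W`. -/
abbrev sHeartIncl : σ.SHeart U V ⥤ QuotCat (U ∩ V : Set B) := ObjectProperty.ι _

/-- The kernel `K = add(U ∗ V)` of a cotorsion pair. -/
def kernelSet : Set B := σ.addStar U V

/-- The coheart `C = ⊥₁K` of a cotorsion pair. -/
def coheart : Set B := {X | ∀ ⦃K : B⦄, K ∈ σ.kernelSet U V → ∀ δ : σ.Ext X K, δ = 0}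


/-- An object of the heart determined by an object of `B` lying in `B⁺ ∩ B⁻`. -/
def sHeartObj {X : B} (hX : X ∈ σ.sHeartSet U V) : σ.SHeart U V :=
  ⟨(toQuot (U ∩ V : Set B)).obj X, hX⟩

/-- The image in the heart of a morphism of `B` between objects of `B⁺ ∩ B⁻`. -/
def sHeartHom {X Y : B} (hX : X ∈ σ.sHeartSet U V) (hY : Y ∈ σ.sHeartSet U V) (f : X ⟶ Y) :
    σ.sHeartObj U V hX ⟶ σ.sHeartObj U V hY :=
  ObjectProperty.homMk ((toQuot (U ∩ V : Set B)).map f)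

end Single

end ExtStruct

end ExtCat

section More

variable {B : Type u} [Category.{v} B] [Preadditive B] [HasFiniteBiproducts B]

namespace ExtStruct

variable (σ : ExtStruct B)

/-- `Ω D₀ = CoCone(P, D₀)`, the syzygy class of a class of objects `D₀`. -/
def omegaSet (D₀ : Set B) : Set B := σ.CoCone σ.projs D₀

/-- A choice of iterated syzygies of `X`: `Z 0 = X` and for each `i` there is a conflation
`Z (i+1) ↣ P ↠ Z i` with `P` projective. -/
def SyzygyChain (X : B) (Z : ℕ → B) : Prop :=
  Z 0 = X ∧ ∀ i : ℕ, ∃ (P : B) (f : Z (i + 1) ⟶ P) (g : P ⟶ Z i),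
    σ.IsProj P ∧ σ.Conflation f g

/-- A choice of iterated cosyzygies of `Y`: `Z 0 = Y` and for each `i` there is a conflation
`Z i ↣ I ↠ Z (i+1)` with `I` injective. -/
def CosyzygyChain (Y : B) (Z : ℕ → B) : Prop :=
  Z 0 = Y ∧ ∀ i : ℕ, ∃ (I : B) (f : Z i ⟶ I) (g : I ⟶ Z (i + 1)),
    σ.IsInj I ∧ σ.Conflation f g

/-- Vanishing of the higher extension group `E^{i+1}(X, Y) = E(X, Σ^i Y)`, expressed via
cosyzygy chains.  (`hExtVanish σ X Y 0` is the vanishing of `E(X,Y)` itself.) -/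
def hExtVanish (X Y : B) (i : ℕ) : Prop :=
  ∀ Z : ℕ → B, σ.CosyzygyChain Y Z → ∀ δ : σ.Ext X (Z i), δ = 0

/-- `Σ^j D₀`: the class of `j`-th cosyzygies of objects of `D₀`. -/
def sigmaSet (j : ℕ) (D₀ : Set B) : Set B :=
  {X | ∃ Y ∈ D₀, ∃ Z : ℕ → B, σ.CosyzygyChain Y Z ∧ Z j = X}

/-- An `n`-cluster tilting subcategory of an extriangulated category:
it is functorially finite, and `X ∈ M` iff `E^i(X, M) = 0` for `1 ≤ i ≤ n - 1`,
iff `E^i(M, X) = 0` for `1 ≤ i ≤ n - 1`. -/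
structure IsNClusterTilting (n : ℕ) (M : Set B) : Prop where
  contravariantly_finite : ∀ X : B, ∃ M₀ ∈ M, ∃ f : M₀ ⟶ X,
      ∀ M₁ ∈ M, ∀ g : M₁ ⟶ X, ∃ h : M₁ ⟶ M₀, h ≫ f = g
  covariantly_finite : ∀ X : B, ∃ M₀ ∈ M, ∃ f : X ⟶ M₀,
      ∀ M₁ ∈ M, ∀ g : X ⟶ M₁, ∃ h : M₀ ⟶ M₁, f ≫ h = g
  mem_iff_vanish_left : ∀ X : B,
      X ∈ M ↔ ∀ i : ℕ, i ≤ n - 2 → ∀ Y ∈ M, σ.hExtVanish X Y i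
  mem_iff_vanish_right : ∀ X : B,
      X ∈ M ↔ ∀ i : ℕ, i ≤ n - 2 → ∀ Y ∈ M, σ.hExtVanish Y X i

/-- `mlev σ M k` is the subcategory `M_{k+1}` of the paper: `M_1 = M` and
`M_{ℓ} = Cone(M_{ℓ-1}, M)`. -/
def mlev (M : Set B) : ℕ → Set B
  | 0 => M
  | (k + 1) => σ.Cone (mlev M k) M

end ExtStruct

section Reflectors

variable (W P N : Set B)

/-- The data of a reflection functor `σ⁺` onto the objects of `B⁺` (given by the class `P`),
i.e. a left adjoint of the inclusion of the full subcategory of `B/W` on `P` in the bijection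
formulation: composing with the unit `B → σ⁺B` gives bijections
`(σ⁺X ⟶ Y) ≃ (X ⟶ Y)` for all `Y` lying in `P`. -/
structure ReflectorData where
  σp : QuotCat W ⥤ QuotCat W
  mem : ∀ X : QuotCat W, (σp.obj X).as ∈ P
  unit : 𝟭 (QuotCat W) ⟶ σp
  bij : ∀ (X Y : QuotCat W), Y.as ∈ P →
      Function.Bijective (fun g : (σp.obj X ⟶ Y) => unit.app X ≫ g)

/-- The data of a coreflection functor `σ⁻` onto the objects of `B⁻` (given by the class `N`). -/
structure CoreflectorData where
  σm : QuotCat W ⥤ QuotCat W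
  mem : ∀ X : QuotCat W, (σm.obj X).as ∈ N
  counit : σm ⟶ 𝟭 (QuotCat W)
  bij : ∀ (X Y : QuotCat W), X.as ∈ N →
      Function.Bijective (fun g : (X ⟶ σm.obj Y) => g ≫ counit.app Y)

end Reflectors

namespace ExtStruct

variable (σ : ExtStruct B)

/-- The data of the cohomological functor `H = σ⁻ ∘ σ⁺ ∘ π : B → H` associated to a cotorsion
pair `(U, V)`: reflection and coreflection functors together with a functor `H` to the heart
which is isomorphic to `σ⁻ ∘ σ⁺ ∘ π` after composition with the inclusion of the heart. -/
structure HeartFunctorData (U V : Set B) where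
  refl : ReflectorData (B := B) (U ∩ V) (σ.sPos U V)
  corefl : CoreflectorData (B := B) (U ∩ V) (σ.sNeg U V)
  H : B ⥤ σ.SHeart U V
  iso : (H ⋙ σ.sHeartIncl U V) ≅ (toQuot (U ∩ V : Set B) ⋙ refl.σp ⋙ corefl.σm)

end ExtStruct

section Mod

variable (D : Type u₂) [Category.{v₂} D] [Preadditive D]

/-- A coherent (finitely presented) functor `Dᵒᵖ ⥤ Ab`: one admitting an exact presentation
`Hom(−,X) → Hom(−,Y) → F → 0`. -/
def IsCoherent (F : Dᵒᵖ ⥤ AddCommGrpCat.{v₂}) : Prop :=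
  ∃ (X Y : D) (f : X ⟶ Y) (η : preadditiveYoneda.obj Y ⟶ F),
    (∀ A : D, Function.Surjective (η.app (op A))) ∧
    (∀ (A : D) (g : A ⟶ Y), η.app (op A) g = 0 ↔ ∃ h : A ⟶ X, h ≫ f = g)

/-- `mod D`: the category of coherent functors `Dᵒᵖ ⥤ Ab`. -/
abbrev ModCat := ObjectProperty.FullSubcategory (fun F : Dᵒᵖ ⥤ AddCommGrpCat.{v₂} => IsCoherent D F)

end Mod

/-- The additive quotient `C/P` of the full subcategory of `B` on a class `C₀` of objects by
(the ideal of) morphisms factoring through objects satisfying `P₀`. -/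
abbrev StableCat (C₀ P₀ : Set B) :=
  QuotCat (D := ObjectProperty.FullSubcategory (fun X : B => X ∈ C₀)) {Z | Z.obj ∈ P₀}

end More

section Statement0Aux

set_option linter.unusedSectionVars false

variable {B : Type u} [Category.{v} B] [Preadditive B] [HasFiniteBiproducts B]

namespace PreExtStruct

variable (σ : PreExtStruct B)

lemma push_id {C A : B} (δ : σ.Ext C A) : σ.push (𝟙 A) δ = δ := by
  simp [push]

lemma pull_id {C A : B} (δ : σ.Ext C A) : σ.pull (𝟙 C) δ = δ := by
  simp [pull]

lemma push_push {C A A' A'' : B} (a : A ⟶ A') (a' : A' ⟶ A'') (δ : σ.Ext C A) :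
    σ.push a' (σ.push a δ) = σ.push (a ≫ a') δ := by
  simp [push]

lemma pull_pull {C'' C' C A : B} (c : C'' ⟶ C') (c' : C' ⟶ C) (δ : σ.Ext C A) :
    σ.pull c (σ.pull c' δ) = σ.pull (c ≫ c') δ := by
  simp only [pull, op_comp, Functor.map_comp]
  rfl

lemma push_pull {C' C A A' : B} (c : C' ⟶ C) (a : A ⟶ A') (δ : σ.Ext C A) :
    σ.push a (σ.pull c δ) = σ.pull c (σ.push a δ) :=
  ConcreteCategory.congr_hom (((σ.E.map c.op).naturality a).symm) δ

lemma push_zero_ext {C A A' : B} (a : A ⟶ A') :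
    σ.push a (0 : σ.Ext C A) = 0 := by
  simp [push]

lemma pull_zero_ext {C' C A : B} (c : C' ⟶ C) :
    σ.pull c (0 : σ.Ext C A) = 0 := by
  simp [pull]

end PreExtStruct

namespace ExtStruct

variable (σ : ExtStruct B)

/-- `realize_iso` with explicit hom/inv data and rewritten source and target morphisms. -/
lemma realize_iso' {A C X X' : B} (δ : σ.Ext C A) (x : A ⟶ X) (y : X ⟶ C)
    (bh : X ⟶ X') (bi : X' ⟶ X) (h1 : bh ≫ bi = 𝟙 X) (h2 : bi ≫ bh = 𝟙 X')
    (h : σ.realize δ x y) {x' : A ⟶ X'} {y' : X' ⟶ C}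
    (hx : x ≫ bh = x') (hy : bi ≫ y = y') : σ.realize δ x' y' := by
  have := σ.realize_iso δ x y ⟨bh, bi, h1, h2⟩ h
  rw [← hx, ← hy]
  exact this

/-- The sequence `Z --0--> W --𝟙--> W` realizes `0` when `Z` is a zero object. -/
lemma realize_zero_left (W : B) {Z : B} (hZ : IsZero Z) :
    σ.realize (0 : σ.Ext W Z) (0 : Z ⟶ W) (𝟙 W) := by
  refine σ.realize_iso' (0 : σ.Ext W Z) biprod.inl biprod.snd
    (biprod.snd : (Z ⊞ W : B) ⟶ W) biprod.inr ?_ (by simp) (σ.realize_zero Z W)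
    (by simp) (by simp)
  apply biprod.hom_ext
  · exact hZ.eq_of_tgt _ _
  · simp

/-- The sequence `W --𝟙--> W --0--> Z` realizes `0` when `Z` is a zero object. -/
lemma realize_zero_right (W : B) {Z : B} (hZ : IsZero Z) :
    σ.realize (0 : σ.Ext Z W) (𝟙 W) (0 : W ⟶ Z) := by
  refine σ.realize_iso' (0 : σ.Ext Z W) biprod.inl biprod.snd
    (biprod.fst : (W ⊞ Z : B) ⟶ W) biprod.inl ?_ (by simp) (σ.realize_zero W Z)
    (by simp) (by simp)
  apply biprod.hom_ext
  · simp
  · exact hZ.eq_of_tgt _ _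

/-- `y` is a weak cokernel of `x` for any conflation `A --x--> X --y--> C`. -/
lemma weak_coker {A X C W : B} (δ : σ.Ext C A) {x : A ⟶ X} {y : X ⟶ C}
    (h : σ.realize δ x y) (t : X ⟶ W) (ht : x ≫ t = 0) :
    ∃ k : C ⟶ W, y ≫ k = t := by
  obtain ⟨Z, hZ⟩ := HasZeroObject.zero (C := B)
  have hz := σ.realize_zero_left W hZ
  obtain ⟨c, -, hc⟩ := σ.et3 δ (0 : σ.Ext W Z) x y (0 : Z ⟶ W) (𝟙 W) h hz
    (0 : A ⟶ Z) t (by simp [ht])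
  exact ⟨c, by simpa using hc⟩

/-- An endomorphism `(𝟙, b, 𝟙)` of an `E`-triangle has `b` an isomorphism. -/
lemma isIso_of_realize_endo {A X C : B} (δ : σ.Ext C A) {x : A ⟶ X} {y : X ⟶ C}
    (h : σ.realize δ x y) (b : X ⟶ X) (hx : x ≫ b = x) (hy : b ≫ y = y) :
    IsIso b := by
  obtain ⟨k, hk⟩ := σ.weak_coker δ h (b - 𝟙 X)
    (by rw [Preadditive.comp_sub, hx, Category.comp_id, sub_self])
  have hb : b = 𝟙 X + y ≫ k := by rw [hk]; abel
  have hyk : (y ≫ k) ≫ y = 0 := by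
    rw [hk, Preadditive.sub_comp, hy, Category.id_comp, sub_self]
  have hyk2 : (y ≫ k) ≫ y ≫ k = 0 := by
    rw [← Category.assoc, hyk, zero_comp]
  refine ⟨𝟙 X - y ≫ k, ?_, ?_⟩
  · rw [hb]
    simp only [Preadditive.add_comp, Preadditive.comp_sub, Preadditive.sub_comp,
      Category.id_comp, Category.comp_id, hyk2]
    abel
  · rw [hb]
    simp only [Preadditive.add_comp, Preadditive.comp_add, Preadditive.sub_comp,
      Category.id_comp, Category.comp_id, hyk2]
    abel

/-- Transport a realization along an isomorphism on the third object. -/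
lemma realize_of_iso_third {A X C C₀ : B} (δ₀ : σ.Ext C₀ A) (ch : C ⟶ C₀) (ci : C₀ ⟶ C)
    (hc1 : ch ≫ ci = 𝟙 C) (hc2 : ci ≫ ch = 𝟙 C₀)
    {x : A ⟶ X} {y : X ⟶ C} (h : σ.realize (σ.pull ch δ₀) x y) :
    σ.realize δ₀ x (y ≫ ch) := by
  obtain ⟨X', x', y', h'⟩ := σ.realize_ex δ₀
  obtain ⟨b, hb1, hb2⟩ := σ.realize_map (σ.pull ch δ₀) δ₀ x y x' y' (𝟙 A) ch
    h h' (by rw [PreExtStruct.push_id])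
  obtain ⟨b', hb1', hb2'⟩ := σ.realize_map δ₀ (σ.pull ch δ₀) x' y' x y (𝟙 A) ci
    h' h (by rw [PreExtStruct.push_id, PreExtStruct.pull_pull, hc2, PreExtStruct.pull_id])
  rw [Category.id_comp] at hb1 hb1'
  have e1 : x ≫ b ≫ b' = x := by rw [← Category.assoc, hb1, hb1']
  have e2 : (b ≫ b') ≫ y = y := by
    rw [Category.assoc, ← hb2', ← Category.assoc, ← hb2, Category.assoc, hc1,
      Category.comp_id]
  have e3 : x' ≫ b' ≫ b = x' := by rw [← Category.assoc, hb1', hb1]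
  have e4 : (b' ≫ b) ≫ y' = y' := by
    rw [Category.assoc, ← hb2, ← Category.assoc, ← hb2', Category.assoc, hc2,
      Category.comp_id]
  have i1 : IsIso (b ≫ b') := σ.isIso_of_realize_endo _ h _ e1 e2
  have i2 : IsIso (b' ≫ b) := σ.isIso_of_realize_endo _ h' _ e3 e4
  have ib : IsIso b := by
    have hr : b ≫ b' ≫ inv (b ≫ b') = 𝟙 X := by
      rw [← Category.assoc, IsIso.hom_inv_id]
    have hl : (inv (b' ≫ b) ≫ b') ≫ b = 𝟙 X' := by
      rw [Category.assoc, IsIso.inv_hom_id]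
    have heq : b' ≫ inv (b ≫ b') = inv (b' ≫ b) ≫ b' := by
      calc b' ≫ inv (b ≫ b')
          = ((inv (b' ≫ b) ≫ b') ≫ b) ≫ b' ≫ inv (b ≫ b') := by
            rw [hl, Category.id_comp]
        _ = (inv (b' ≫ b) ≫ b') ≫ b ≫ b' ≫ inv (b ≫ b') := by
            simp only [Category.assoc]
        _ = inv (b' ≫ b) ≫ b' := by rw [hr, Category.comp_id]
    exact ⟨b' ≫ inv (b ≫ b'), hr, by rw [heq]; exact hl⟩
  exact σ.realize_iso' δ₀ x' y' (inv b) b (IsIso.inv_hom_id b) (IsIso.hom_inv_id b) h'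
    (by rw [← hb1, Category.assoc, IsIso.hom_inv_id, Category.comp_id]) hb2.symm

end ExtStruct

end Statement0Aux

/-- Proposition 1.20 / dual of `[NP, Corollary 3.16]`.
Given an `E`-triangle `A --x--> B₀ --y--> C --δ-->`, a morphism `f : A ⟶ D`, and an
`E`-triangle `D --d--> E₀ --e--> C --f_*δ-->` realizing `f_*δ`, there is a morphism
`g : B₀ ⟶ E₀` such that `(f, g, 𝟙 C)` is a morphism of `E`-triangles, and
`A --[-f,x]ᵀ--> D ⊞ B₀ --[d,g]--> E₀ --e^*δ-->` is an `E`-triangle. -/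
theorem statement_0 {B : Type u} [Category.{v} B] [Preadditive B] [HasFiniteBiproducts B]
    (σ : ExtStruct B) {A B₀ C D E₀ : B}
    (δ : σ.Ext C A) (x : A ⟶ B₀) (y : B₀ ⟶ C) (hδ : σ.realize δ x y)
    (f : A ⟶ D) (d : D ⟶ E₀) (e : E₀ ⟶ C) (hfδ : σ.realize (σ.push f δ) d e) :
    ∃ g : B₀ ⟶ E₀,
      (x ≫ g = f ≫ d ∧ y = g ≫ e) ∧
      σ.realize (σ.pull e δ) (biprod.lift (-f) x) (biprod.desc d g) := by
  classical
  obtain ⟨Z, hZ⟩ := HasZeroObject.zero (C := B)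
  -- T1 : `A --[-f,1]--> D ⊞ A --[1,f]--> D` realizes `0`.
  have hT1 : σ.realize (0 : σ.Ext D A) (biprod.lift (-f) (𝟙 A))
      (biprod.desc (𝟙 D) f) := by
    refine σ.realize_iso' (0 : σ.Ext D A) biprod.inl biprod.snd
      (biprod.desc (biprod.lift (-f) (𝟙 A)) biprod.inl :
        (A ⊞ D : B) ⟶ (D ⊞ A : B))
      (biprod.desc biprod.inr (biprod.lift (𝟙 A) f)) ?_ ?_ (σ.realize_zero A D)
      (by simp) ?_
    · apply biprod.hom_ext' <;> apply biprod.hom_ext <;>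
        simp [biprod.lift_desc, Preadditive.add_comp, Preadditive.comp_add]
    · apply biprod.hom_ext' <;> apply biprod.hom_ext <;>
        simp [biprod.lift_desc, Preadditive.add_comp, Preadditive.comp_add]
    · apply biprod.hom_ext' <;> simp
  -- T2 : `D ⊞ A --map 𝟙 x--> D ⊞ B₀ --g'--> C` realizes `(inr)_* δ`.
  have hzD : σ.realize (0 : σ.Ext Z D) (𝟙 D) (0 : D ⟶ Z) := σ.realize_zero_right D hZ
  have hsum := σ.realize_sum (0 : σ.Ext Z D) δ (𝟙 D) (0 : D ⟶ Z) x y hzD hδ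
  have hsumExt : σ.sumExt (0 : σ.Ext Z D) δ =
      σ.pull (biprod.snd : (Z ⊞ C : B) ⟶ C) (σ.push (biprod.inr : A ⟶ D ⊞ A) δ) := by
    simp only [PreExtStruct.sumExt]
    rw [PreExtStruct.pull_zero_ext, PreExtStruct.push_zero_ext, zero_add,
      PreExtStruct.push_pull]
  rw [hsumExt] at hsum
  have hT2 : σ.realize (σ.push (biprod.inr : A ⟶ D ⊞ A) δ)
      (biprod.map (𝟙 D) x) (biprod.map (0 : D ⟶ Z) y ≫ biprod.snd) := by
    refine σ.realize_of_iso_third _ (biprod.snd : (Z ⊞ C : B) ⟶ C) biprod.inr ?_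
      (by simp) hsum
    apply biprod.hom_ext
    · exact hZ.eq_of_tgt _ _
    · simp
  -- (ET4)
  obtain ⟨E₁, d₁, e₁, h', δc, hcomm1, hcomm2, hreal3, hreal4, -, hpush6⟩ :=
    σ.et4 (0 : σ.Ext D A) (biprod.lift (-f) (𝟙 A)) (biprod.desc (𝟙 D) f)
      (σ.push (biprod.inr : A ⟶ D ⊞ A) δ) (biprod.map (𝟙 D) x)
      (biprod.map (0 : D ⟶ Z) y ≫ biprod.snd) hT1 hT2
  have hreal4' : σ.realize (σ.push f δ) d₁ e₁ := by
    rwa [PreExtStruct.push_push, biprod.inr_desc] at hreal4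
  obtain ⟨θ, hθ1, hθ2⟩ := σ.realize_unique (σ.push f δ) d₁ e₁ d e hreal4' hfδ
  -- `inl ≫ h' = d₁` and `x ≫ inr ≫ h' = f ≫ d₁`
  have hinl : (biprod.inl : D ⟶ D ⊞ B₀) ≫ h' = d₁ := by
    have h7 : (biprod.inl : D ⟶ D ⊞ A) ≫ biprod.map (𝟙 D) x ≫ h' =
        (biprod.inl : D ⟶ D ⊞ A) ≫ biprod.desc (𝟙 D) f ≫ d₁ := by
      rw [hcomm1]
    rw [← Category.assoc, ← Category.assoc, biprod.inl_map, biprod.inl_desc,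
      Category.assoc, Category.id_comp] at h7
    simpa using h7
  have hinr : x ≫ (biprod.inr : B₀ ⟶ D ⊞ B₀) ≫ h' = f ≫ d₁ := by
    have h8 : (biprod.inr : A ⟶ D ⊞ A) ≫ biprod.map (𝟙 D) x ≫ h' =
        (biprod.inr : A ⟶ D ⊞ A) ≫ biprod.desc (𝟙 D) f ≫ d₁ := by
      rw [hcomm1]
    rwa [← Category.assoc, ← Category.assoc, biprod.inr_map, biprod.inr_desc,
      Category.assoc] at h8
  refine ⟨biprod.inr ≫ h' ≫ θ.hom, ⟨?_, ?_⟩, ?_⟩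
  · -- x ≫ g = f ≫ d
    calc x ≫ biprod.inr ≫ h' ≫ θ.hom
        = (x ≫ biprod.inr ≫ h') ≫ θ.hom := by simp only [Category.assoc]
      _ = (f ≫ d₁) ≫ θ.hom := by rw [hinr]
      _ = f ≫ d := by rw [Category.assoc, hθ1]
  · -- y = g ≫ e
    have h6 : (biprod.inr : B₀ ⟶ D ⊞ B₀) ≫ h' ≫ e₁ = y := by
      rw [hcomm2, ← Category.assoc, biprod.inr_map, Category.assoc, biprod.inr_snd,
        Category.comp_id]
    calc y = (biprod.inr : B₀ ⟶ D ⊞ B₀) ≫ h' ≫ e₁ := h6.symm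
      _ = biprod.inr ≫ h' ≫ θ.hom ≫ e := by rw [hθ2]
      _ = (biprod.inr ≫ h' ≫ θ.hom) ≫ e := by simp only [Category.assoc]
  · -- the mapping-cone conflation
    have h9 := congrArg (σ.push (biprod.snd : (D ⊞ A : B) ⟶ A)) hpush6
    rw [PreExtStruct.push_push, biprod.lift_snd, PreExtStruct.push_id,
      PreExtStruct.push_pull, PreExtStruct.push_push, biprod.inr_snd,
      PreExtStruct.push_id] at h9
    have hδc : δc = σ.pull θ.hom (σ.pull e δ) := by
      rw [h9, PreExtStruct.pull_pull, hθ2]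
    rw [hδc] at hreal3
    have key := σ.realize_of_iso_third (σ.pull e δ) θ.hom θ.inv θ.hom_inv_id
      θ.inv_hom_id hreal3
    have hx2 : biprod.lift (-f) (𝟙 A) ≫ biprod.map (𝟙 D) x = biprod.lift (-f) x := by
      apply biprod.hom_ext <;> simp
    have hy2 : h' ≫ θ.hom = biprod.desc d (biprod.inr ≫ h' ≫ θ.hom) := by
      apply biprod.hom_ext'
      · rw [biprod.inl_desc, ← Category.assoc, hinl, hθ1]
      · rw [biprod.inr_desc]
    rwa [hx2, hy2] at key

end ExtriHearts
end

section
/- Let ((S,T),(U,V)) be a twin cotorsion pair on an extriangulated category B. (a) If A ↣ B ↠ U is a conflation with U ∈ U and A ∈ B^-, then B ∈ B^-. (b) If A ↣ B ↠ S is a conflation with S ∈ S and B ∈ B^-, then A ∈ B^-; in particular B^- = CoCone(U, S). -/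
namespace ExtriHearts

open CategoryTheory CategoryTheory.Limits Opposite

attribute [local instance] CategoryTheory.Limits.hasBinaryBiproducts_of_finite_biproducts

universe v u v₂ u₂

section ProofAux

variable {B : Type u} [Category.{v} B] [Preadditive B] [HasFiniteBiproducts B] (σ : ExtStruct B)

lemma push_push {C A A' A'' : B} (a : A ⟶ A') (b : A' ⟶ A'') (δ : σ.Ext C A) :
    σ.push b (σ.push a δ) = σ.push (a ≫ b) δ := by
  simp [PreExtStruct.push, Functor.map_comp]

lemma pull_pull {C'' C' C A : B} (c : C'' ⟶ C') (c' : C' ⟶ C) (δ : σ.Ext C A) :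
    σ.pull c (σ.pull c' δ) = σ.pull (c ≫ c') δ := by
  show (σ.E.map c.op).app A ((σ.E.map c'.op).app A δ) = (σ.E.map (c ≫ c').op).app A δ
  rw [op_comp, σ.E.map_comp, NatTrans.comp_app, comp_apply]

lemma push_pull {C' C A A' : B} (a : A ⟶ A') (c : C' ⟶ C) (δ : σ.Ext C A) :
    σ.push a (σ.pull c δ) = σ.pull c (σ.push a δ) := by
  show (σ.E.obj (op C')).map a ((σ.E.map c.op).app A δ) =
    (σ.E.map c.op).app A' ((σ.E.obj (op C)).map a δ)
  rw [← comp_apply, ← comp_apply, NatTrans.naturality]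

lemma push_id {C A : B} (δ : σ.Ext C A) : σ.push (𝟙 A) δ = δ := by
  simp [PreExtStruct.push]

lemma pull_id {C A : B} (δ : σ.Ext C A) : σ.pull (𝟙 C) δ = δ := by
  simp [PreExtStruct.pull]

lemma push_zero {C A A' : B} (a : A ⟶ A') : σ.push a (0 : σ.Ext C A) = 0 := by
  simp [PreExtStruct.push]

lemma pull_zero {C' C A : B} (c : C' ⟶ C) : σ.pull c (0 : σ.Ext C A) = 0 := by
  simp [PreExtStruct.pull]

lemma pull_sub_map {C' C A : B} (c c' : C' ⟶ C) (δ : σ.Ext C A) :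
    σ.pull (c - c') δ = σ.pull c δ - σ.pull c' δ := by
  have : Functor.Additive (σ.E.flip.obj A) := σ.additive_snd A
  have h : (σ.E.flip.obj A).map (c.op - c'.op) =
      (σ.E.flip.obj A).map c.op - (σ.E.flip.obj A).map c'.op :=
    Functor.map_sub _
  have hop : (c - c').op = c.op - c'.op := rfl
  have h2 := congrArg (fun f => f δ) h
  show (σ.E.map (c - c').op).app A δ = (σ.E.map c.op).app A δ - (σ.E.map c'.op).app A δ
  rw [hop]
  exact h2

end ProofAux
section ProofAux2

variable {B : Type u} [Category.{v} B] [Preadditive B] [HasFiniteBiproducts B] (σ : ExtStruct B)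

lemma split_of_realize_zero {A C X : B} {f : A ⟶ X} {g : X ⟶ C}
    (h : σ.realize (0 : σ.Ext C A) f g) :
    (∃ r : X ⟶ A, f ≫ r = 𝟙 A) ∧ (∃ s : C ⟶ X, s ≫ g = 𝟙 C) := by
  obtain ⟨b, hb1, hb2⟩ := σ.realize_unique (0 : σ.Ext C A) f g biprod.inl biprod.snd h
    (σ.realize_zero A C)
  constructor
  · exact ⟨b.hom ≫ biprod.fst, by rw [← Category.assoc, hb1, biprod.inl_fst]⟩
  · refine ⟨biprod.inr ≫ b.inv, ?_⟩
    have h3 : b.inv ≫ g = biprod.snd := by rw [← hb2, Iso.inv_hom_id_assoc]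
    rw [Category.assoc, h3, biprod.inr_snd]

lemma exists_id_conflation (A : B) :
    ∃ (Z : B) (z : A ⟶ Z), IsZero Z ∧ σ.realize (0 : σ.Ext Z A) (𝟙 A) z := by
  obtain ⟨Z, hZ⟩ := HasZeroObject.zero (C := B)
  have hb : (biprod.fst ≫ biprod.inl : A ⊞ Z ⟶ A ⊞ Z) = 𝟙 (A ⊞ Z) := by
    apply biprod.hom_ext'
    · simp
    · exact hZ.eq_of_src _ _
  set b : (A ⊞ Z) ≅ A := ⟨biprod.fst, biprod.inl, hb, by simp⟩ with hbdef
  have h := σ.realize_iso (0 : σ.Ext Z A) biprod.inl biprod.snd b (σ.realize_zero A Z)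
  refine ⟨Z, biprod.inl ≫ biprod.snd, hZ, ?_⟩
  simpa [hbdef] using h

lemma realize_shear_left {A D : B} (a : A ⟶ D) :
    σ.realize (0 : σ.Ext D A) (biprod.lift (𝟙 A) a) (biprod.snd - biprod.fst ≫ a) := by
  set u : (A ⊞ D) ≅ (A ⊞ D) :=
    ⟨𝟙 _ + biprod.fst ≫ a ≫ biprod.inr, 𝟙 _ - biprod.fst ≫ a ≫ biprod.inr,
      by simp [Preadditive.comp_sub, Preadditive.sub_comp, Preadditive.add_comp, Preadditive.comp_add], by
        simp [Preadditive.comp_sub, Preadditive.sub_comp, Preadditive.add_comp, Preadditive.comp_add]⟩ with hudef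
  have h := σ.realize_iso (0 : σ.Ext D A) biprod.inl biprod.snd u (σ.realize_zero A D)
  have h1 : biprod.inl ≫ u.hom = biprod.lift (𝟙 A) a := by
    apply biprod.hom_ext <;> simp [hudef]
  have h2 : u.inv ≫ biprod.snd = biprod.snd - biprod.fst ≫ a := by
    simp [hudef, Preadditive.sub_comp]
  rwa [h1, h2] at h

lemma realize_shear_right {A C : B} (f : A ⟶ C) :
    σ.realize (0 : σ.Ext C A) (biprod.lift f (𝟙 A)) (biprod.fst - biprod.snd ≫ f) := by
  set v : (A ⊞ C) ≅ (C ⊞ A) :=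
    ⟨biprod.lift (biprod.fst ≫ f + biprod.snd) biprod.fst,
     biprod.lift biprod.snd (biprod.fst - biprod.snd ≫ f),
     by apply biprod.hom_ext <;> simp [Preadditive.comp_sub, Preadditive.comp_add],
     by apply biprod.hom_ext <;> simp [Preadditive.comp_sub, Preadditive.comp_add, Preadditive.sub_comp, Preadditive.add_comp]⟩ with hvdef
  have h := σ.realize_iso (0 : σ.Ext C A) biprod.inl biprod.snd v (σ.realize_zero A C)
  have h1 : biprod.inl ≫ v.hom = biprod.lift f (𝟙 A) := by
    apply biprod.hom_ext <;> simp [hvdef]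
  have h2 : v.inv ≫ biprod.snd = biprod.fst - biprod.snd ≫ f := by
    simp [hvdef]
  rwa [h1, h2] at h

lemma push_infl_zero {A X C : B} {δ : σ.Ext C A} {x : A ⟶ X} {y : X ⟶ C}
    (h : σ.realize δ x y) : σ.push x δ = 0 := by
  obtain ⟨c, hc, -⟩ := σ.et3 δ (0 : σ.Ext C X) x y biprod.inl biprod.snd h
    (σ.realize_zero X C) x biprod.inl rfl
  rw [hc, pull_zero]

lemma pull_defl_zero {A X C : B} {δ : σ.Ext C A} {x : A ⟶ X} {y : X ⟶ C}
    (h : σ.realize δ x y) : σ.pull y δ = 0 := by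
  obtain ⟨a, ha, -⟩ := σ.et3op (0 : σ.Ext X A) δ biprod.inl biprod.snd x y
    (σ.realize_zero A X) h biprod.snd y rfl
  rw [← ha, push_zero]

lemma factor_of_pull_eq_zero {A M X Z : B} {ε : σ.Ext X A} {m : A ⟶ M} {q : M ⟶ X}
    (h : σ.realize ε m q) (t : Z ⟶ X) (ht : σ.pull t ε = 0) :
    ∃ u : Z ⟶ M, u ≫ q = t := by
  obtain ⟨b, hb1, hb2⟩ := σ.realize_map (0 : σ.Ext Z A) ε biprod.inl biprod.snd m q (𝟙 A) t
    (σ.realize_zero A Z) h (by rw [ht, push_zero])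
  refine ⟨biprod.inr ≫ b, ?_⟩
  rw [Category.assoc, ← hb2, biprod.inr_snd_assoc]

lemma exists_pull_of_push_eq_zero {A M X Z : B} {ε : σ.Ext X A} {m : A ⟶ M} {q : M ⟶ X}
    (h : σ.realize ε m q) (η : σ.Ext Z A) (hη : σ.push m η = 0) :
    ∃ t : Z ⟶ X, σ.pull t ε = η := by
  obtain ⟨N, n, k, hN⟩ := σ.realize_ex η
  obtain ⟨b, hb1, hb2⟩ := σ.realize_map η (0 : σ.Ext Z M) n k biprod.inl biprod.snd m (𝟙 Z)
    hN (σ.realize_zero M Z) (by rw [hη, pull_zero])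
  have hj : n ≫ (b ≫ biprod.fst) = 𝟙 A ≫ m := by
    rw [← Category.assoc, hb1, Category.assoc, biprod.inl_fst, Category.comp_id,
      Category.id_comp]
  obtain ⟨c, hc, -⟩ := σ.et3 η ε n k m q hN h (𝟙 A) (b ≫ biprod.fst) hj
  exact ⟨c, by rw [← hc, push_id]⟩

end ProofAux2
section ProofAux3

variable {B : Type u} [Category.{v} B] [Preadditive B] [HasFiniteBiproducts B] (σ : ExtStruct B)

lemma endo_iso {A M X : B} {ε : σ.Ext X A} {m : A ⟶ M} {q : M ⟶ X}
    (h : σ.realize ε m q) (e : X ⟶ X) (hqe : q ≫ e = q) (hεe : σ.pull e ε = ε) :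
    IsIso e := by
  have h0 : σ.pull (e - 𝟙 X) ε = 0 := by rw [pull_sub_map, hεe, pull_id, sub_self]
  obtain ⟨u, hu⟩ := factor_of_pull_eq_zero σ h (e - 𝟙 X) h0
  have he : e = 𝟙 X + u ≫ q := by rw [hu]; abel
  have hqn : q ≫ (u ≫ q) = 0 := by
    have h1 : q ≫ (e - 𝟙 X) = 0 := by
      rw [Preadditive.comp_sub, hqe, Category.comp_id, sub_self]
    rw [← hu] at h1
    exact h1
  have hn2 : (u ≫ q) ≫ (u ≫ q) = 0 := by
    rw [Category.assoc, hqn, Limits.comp_zero]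
  refine ⟨⟨𝟙 X - u ≫ q, ?_, ?_⟩⟩
  · rw [he]
    simp only [Preadditive.add_comp, Preadditive.comp_sub, Category.id_comp, Category.comp_id]
    rw [hn2]
    abel
  · rw [he]
    simp only [Preadditive.sub_comp, Preadditive.comp_add, Category.id_comp, Category.comp_id]
    rw [hn2]
    abel

lemma cone_unique {A M X X' : B} {ε : σ.Ext X A} {ε' : σ.Ext X' A} {m : A ⟶ M}
    {q : M ⟶ X} {q' : M ⟶ X'} (h : σ.realize ε m q) (h' : σ.realize ε' m q') :
    ∃ c : X ⟶ X', IsIso c ∧ q ≫ c = q' := by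
  obtain ⟨c, hc, hqc⟩ := σ.et3 ε ε' m q m q' h h' (𝟙 A) (𝟙 M) (by simp)
  obtain ⟨c', hc', hqc'⟩ := σ.et3 ε' ε m q' m q h' h (𝟙 A) (𝟙 M) (by simp)
  rw [push_id] at hc hc'
  rw [Category.id_comp] at hqc hqc'
  have he : σ.pull (c ≫ c') ε = ε := by rw [← pull_pull, ← hc', ← hc]
  have he' : σ.pull (c' ≫ c) ε' = ε' := by rw [← pull_pull, ← hc, ← hc']
  have hqe : q ≫ (c ≫ c') = q := by rw [← Category.assoc, hqc, hqc']
  have hqe' : q' ≫ (c' ≫ c) = q' := by rw [← Category.assoc, hqc', hqc]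
  have h1 : IsIso (c ≫ c') := endo_iso σ h _ hqe he
  have h2 : IsIso (c' ≫ c) := endo_iso σ h' _ hqe' he'
  have hright : c ≫ (c' ≫ inv (c ≫ c')) = 𝟙 X := by
    rw [← Category.assoc, IsIso.hom_inv_id]
  have hleft : (inv (c' ≫ c) ≫ c') ≫ c = 𝟙 X' := by
    rw [Category.assoc, IsIso.inv_hom_id]
  have heq : inv (c' ≫ c) ≫ c' = c' ≫ inv (c ≫ c') := by
    calc inv (c' ≫ c) ≫ c'
        = (inv (c' ≫ c) ≫ c') ≫ (c ≫ (c' ≫ inv (c ≫ c'))) := by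
          rw [hright, Category.comp_id]
      _ = ((inv (c' ≫ c) ≫ c') ≫ c) ≫ (c' ≫ inv (c ≫ c')) := by
          simp only [Category.assoc]
      _ = c' ≫ inv (c ≫ c') := by rw [hleft, Category.id_comp]
  refine ⟨c, ⟨⟨c' ≫ inv (c ≫ c'), hright, ?_⟩⟩, hqc⟩
  rw [← heq, Category.assoc, IsIso.inv_hom_id]

lemma contra_exact {X Y Z Q : B} {θ : σ.Ext Z X} {x : X ⟶ Y} {y : Y ⟶ Z}
    (hθ : σ.realize θ x y) (δ : σ.Ext Y Q) (hδ : σ.pull x δ = 0) :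
    ∃ ε : σ.Ext Z Q, σ.pull y ε = δ := by
  obtain ⟨M, mδ, e, hM⟩ := σ.realize_ex δ
  obtain ⟨E₀, e₁, d, m₁, δ'', hsq, hcomp, hr1, hr2, hpush, hpull⟩ := σ.et4op δ mδ e θ x y hM hθ
  rw [hδ] at hr2
  obtain ⟨⟨r, hre⟩, -⟩ := split_of_realize_zero σ hr2
  refine ⟨σ.push r δ'', ?_⟩
  rw [← push_pull, hpull, push_push, hre, push_id]

variable {S T U V : Set B}

lemma mem_of_ext_vanish (cp : σ.IsCotorsionPair U V) {X : B}
    (h : ∀ V₀ ∈ V, ∀ δ : σ.Ext X V₀, δ = 0) : X ∈ U := by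
  obtain ⟨V₀, U₀, f, g, hV, hU, δ, hreal⟩ := cp.resolve X
  have hδ : δ = 0 := h V₀ hV δ
  rw [hδ] at hreal
  obtain ⟨-, s, hs⟩ := split_of_realize_zero σ hreal
  exact cp.addU.summand_mem X U₀ hU s g hs

lemma ext_closed_of_cp (cp : σ.IsCotorsionPair U V) {X Y Z : B} {ρ : σ.Ext Z X}
    {x : X ⟶ Y} {y : Y ⟶ Z} (h : σ.realize ρ x y) (hX : X ∈ U) (hZ : Z ∈ U) : Y ∈ U := by
  refine mem_of_ext_vanish σ cp (fun V₀ hV δ => ?_)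
  have h1 : σ.pull x δ = 0 := cp.ext_vanish hX hV _
  obtain ⟨ε, hε⟩ := contra_exact σ h δ h1
  have hε0 : ε = 0 := cp.ext_vanish hZ hV ε
  rw [← hε, hε0, pull_zero]

end ProofAux3
section ProofAux4

variable {B : Type u} [Category.{v} B] [Preadditive B] [HasFiniteBiproducts B] (σ : ExtStruct B)
variable {S T U V : Set B}

lemma s_sub_u (twin : σ.IsTwinCotorsionPair S T U V) {X : B} (hX : X ∈ S) : X ∈ U :=
  mem_of_ext_vanish σ twin.snd (fun _ hV δ => twin.ext_SV hX hV δ)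

lemma coconeUS_sub_tNeg (twin : σ.IsTwinCotorsionPair S T U V) :
    σ.CoCone U S ⊆ σ.tNeg S T U := by
  rintro B₁ ⟨X, S₀, i, p, hXU, hS₀, δB, hδB⟩
  obtain ⟨T₁, S₁, fX, gX, hT₁, hS₁, δX, hδX⟩ := twin.fst.coresolve X
  have hT₁U : T₁ ∈ U := ext_closed_of_cp σ twin.snd hδX hXU (s_sub_u σ twin hS₁)
  obtain ⟨E₀, d, e, h', δ'', hsq, hcomp, hr1, hr2, hpull, hpush⟩ :=
    σ.et4 δB i p δX fX gX hδB hδX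
  have hE₀ : E₀ ∈ S := ext_closed_of_cp σ twin.fst hr2 hS₀ hS₁
  exact ⟨T₁, E₀, i ≫ fX, h', ⟨hT₁, hT₁U⟩, hE₀, δ'', hr1⟩

lemma part_b (twin : σ.IsTwinCotorsionPair S T U V) {A B₀ S₀ : B} (f : A ⟶ B₀) (g : B₀ ⟶ S₀)
    (hc : σ.Conflation f g) (hS₀ : S₀ ∈ S) (hB : B₀ ∈ σ.tNeg S T U) : A ∈ σ.tNeg S T U := by
  obtain ⟨δ, hδ⟩ := hc
  obtain ⟨W₁, S₁, b₁, b₂, ⟨hW₁T, hW₁U⟩, hS₁, δB, hδB⟩ := hB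
  obtain ⟨E₀, d, e, h', δ'', _, _, hr1, hr2, _, _⟩ := σ.et4 δ f g δB b₁ b₂ hδ hδB
  have hE₀ : E₀ ∈ S := ext_closed_of_cp σ twin.fst hr2 hS₀ hS₁
  exact ⟨W₁, E₀, f ≫ b₁, h', ⟨hW₁T, hW₁U⟩, hE₀, δ'', hr1⟩

lemma part_a (twin : σ.IsTwinCotorsionPair S T U V) {A B₀ U₀ : B} (f : A ⟶ B₀) (g : B₀ ⟶ U₀)
    (hc : σ.Conflation f g) (hU₀ : U₀ ∈ U) (hA : A ∈ σ.tNeg S T U) : B₀ ∈ σ.tNeg S T U := by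
  obtain ⟨θ, hθ⟩ := hc
  obtain ⟨W₁, S₁, a, a', ⟨hW₁T, hW₁U⟩, hS₁, δA, hδA⟩ := hA
  obtain ⟨Z₁, z₁, hZ₁, hz₁⟩ := exists_id_conflation σ W₁
  obtain ⟨Z₂, z₂, hZ₂, hz₂⟩ := exists_id_conflation σ B₀
  have sum1 := σ.realize_sum θ (0 : σ.Ext Z₁ W₁) f g (𝟙 W₁) z₁ hθ hz₁
  have sum2 := σ.realize_sum (0 : σ.Ext Z₂ B₀) δA (𝟙 B₀) z₂ a a' hz₂ hδA
  obtain ⟨E₀, d₀, e₀, h₀, δ''₀, _, _, hr₀, hr₀', _, _⟩ :=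
    σ.et4 (0 : σ.Ext W₁ A) (biprod.lift (𝟙 A) a) (biprod.snd - biprod.fst ≫ a)
      (σ.sumExt θ 0) (biprod.map f (𝟙 W₁)) (biprod.map g z₁)
      (realize_shear_left σ a) sum1
  obtain ⟨E₁, d₁, e₁, h₁, δ''₁, _, _, hr₁, hr₁', _, _⟩ :=
    σ.et4 (0 : σ.Ext B₀ A) (biprod.lift f (𝟙 A)) (biprod.fst - biprod.snd ≫ f)
      (σ.sumExt 0 δA) (biprod.map (𝟙 B₀) a) (biprod.map z₂ a')
      (realize_shear_right σ f) sum2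
  have hcomp0 : biprod.lift (𝟙 A) a ≫ biprod.map f (𝟙 W₁) = biprod.lift f a := by
    apply biprod.hom_ext <;> simp
  have hcomp1 : biprod.lift f (𝟙 A) ≫ biprod.map (𝟙 B₀) a = biprod.lift f a := by
    apply biprod.hom_ext <;> simp
  rw [hcomp0] at hr₀
  rw [hcomp1] at hr₁
  have hE₀U : E₀ ∈ U :=
    ext_closed_of_cp σ twin.snd hr₀' hW₁U
      (twin.snd.addU.biprod_mem _ _ hU₀ (twin.snd.addU.zero_mem _ hZ₁))
  obtain ⟨c, hciso, -⟩ := cone_unique σ hr₀ hr₁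
  have hE₁U : E₁ ∈ U := twin.snd.addU.summand_mem E₁ E₀ hE₀U (inv c) c (by simp)
  apply coconeUS_sub_tNeg σ twin
  exact ⟨E₁, Z₂ ⊞ S₁, d₁, e₁, hE₁U,
    twin.fst.addU.biprod_mem _ _ (twin.fst.addU.zero_mem _ hZ₂) hS₁, ⟨_, hr₁'⟩⟩

end ProofAux4
/-- Lemma 2.9 / `CP1`. Let `((S,T),(U,V))` be a twin cotorsion pair.
(a) If `A ↣ B₀ ↠ U₀` is a conflation with `U₀ ∈ U` and `A ∈ B⁻`, then `B₀ ∈ B⁻`.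
(b) If `A ↣ B₀ ↠ S₀` is a conflation with `S₀ ∈ S` and `B₀ ∈ B⁻`, then `A ∈ B⁻`;
in particular `B⁻ = CoCone(U, S)`. -/
theorem statement_1 {B : Type u} [Category.{v} B] [Preadditive B] [HasFiniteBiproducts B]
    (σ : ExtStruct B) {S T U V : Set B} (twin : σ.IsTwinCotorsionPair S T U V) :
    (∀ ⦃A B₀ U₀ : B⦄ (f : A ⟶ B₀) (g : B₀ ⟶ U₀), σ.Conflation f g → U₀ ∈ U →
        A ∈ σ.tNeg S T U → B₀ ∈ σ.tNeg S T U) ∧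
    (∀ ⦃A B₀ S₀ : B⦄ (f : A ⟶ B₀) (g : B₀ ⟶ S₀), σ.Conflation f g → S₀ ∈ S →
        B₀ ∈ σ.tNeg S T U → A ∈ σ.tNeg S T U) ∧
    σ.tNeg S T U = σ.CoCone U S := by
  refine ⟨fun A B₀ U₀ f g hc hU₀ hA => part_a σ twin f g hc hU₀ hA,
    fun A B₀ S₀ f g hc hS₀ hB => part_b σ twin f g hc hS₀ hB, ?_⟩
  apply Set.Subset.antisymm
  · rintro B₁ ⟨W₁, S₁, f, g, ⟨hT, hU⟩, hS, hc⟩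
    exact ⟨W₁, S₁, f, g, hU, hS, hc⟩
  · exact coconeUS_sub_tNeg σ twin

end ExtriHearts
end
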